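/- In any list schedule of a DAG on m processors, there exists a directed chain of tasks from source to sink such that at every time instant during the schedule at which some processor is idle, a task on this chain is executing; consequently the total idle time I satisfies I ≤ (m−1)·L where L is the static cost of that chain. -/

import Mathlib

/-- In any list schedule of a DAG on `m` processors there is a directed chain such that
whenever some processor is idle a task of the chain is executing; consequently the total
idle time `I` satisfies `I ≤ (m - 1) * L` where `L` is the static cost of the chain. -/
theorem stmt_4 {V : Type*} [Fintype V] [Nonempty V]
    (E : V → V → Prop) (c τ : V → ℝ) (m : ℕ) (hm : 0 < m) (proc : V → Fin m)
    (hpos : ∀ v, 0 < c v) (hstart : ∀ v, 0 ≤ τ v)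
    (hdisj : ∀ u v, u ≠ v → proc u = proc v → τ u + c u ≤ τ v ∨ τ v + c v ≤ τ u)
    (hprec : ∀ u v, E u v → τ u + c u ≤ τ v)
    (M : ℝ)
    (hM : M = Finset.univ.sup' Finset.univ_nonempty (fun v => τ v + c v))
    -- list-scheduling property: no processor is idle while some ready task is unscheduled
    (hlist : ∀ t : ℝ, 0 ≤ t → t < M →
      (∃ v, t < τ v ∧ ∀ u, E u v → τ u + c u ≤ t) →
      ∀ p : Fin m, ∃ v, proc v = p ∧ τ v ≤ t ∧ t < τ v + c v)
    (I : ℝ)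
    (hI : I = ∑ p : Fin m, (MeasureTheory.volume
      {t : ℝ | t ∈ Set.Ico (0 : ℝ) M ∧
        ∀ v, proc v = p → t ∉ Set.Ico (τ v) (τ v + c v)}).toReal) :
    ∃ l : List V, l.Chain' E ∧
      (∀ t : ℝ, 0 ≤ t → t < M →
        (∃ p : Fin m, ∀ v, proc v = p → ¬ (τ v ≤ t ∧ t < τ v + c v)) →
        ∃ v ∈ l, τ v ≤ t ∧ t < τ v + c v) ∧
      I ≤ ((m : ℝ) - 1) * (l.map c).sum := by
  classical
  set Idle : ℝ → Prop := fun t => ∃ p : Fin m, ∀ v, proc v = p → ¬ (τ v ≤ t ∧ t < τ v + c v)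
    with hIdleDef
  have hle : ∀ v, τ v + c v ≤ M := by
    intro v; rw [hM]; exact Finset.le_sup' (fun v => τ v + c v) (Finset.mem_univ v)
  have htltM : ∀ v, τ v < M := fun v => lt_of_lt_of_le (by linarith [hpos v]) (hle v)
  have noIdleReady : ∀ t : ℝ, 0 ≤ t → t < M →
      (∃ v, t < τ v ∧ ∀ u, E u v → τ u + c u ≤ t) → ¬ Idle t := by
    rintro t h0 hM' hready ⟨p, hp⟩
    obtain ⟨v, hv, h1, h2⟩ := hlist t h0 hM' hready p
    exact hp v hv ⟨h1, h2⟩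
  -- main chain construction
  have main : ∀ n : ℕ, ∀ v : V, (Finset.univ.filter (fun u => τ u < τ v)).card < n →
      ∃ l : List V, l.getLast? = some v ∧ List.Chain' E l ∧
        ∀ t, 0 ≤ t → Idle t → t < τ v → ∃ u ∈ l, τ u ≤ t ∧ t < τ u + c u := by
    intro n
    induction n with
    | zero => intro v hv; exact absurd hv (Nat.not_lt_zero _)
    | succ n IH =>
      intro v hv
      by_cases hP : (Finset.univ.filter (fun u => E u v)).Nonempty
      · obtain ⟨u, hu, hmax⟩ := Finset.exists_max_image _ (fun u => τ u + c u) hP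
        have hEuv : E u v := (Finset.mem_filter.mp hu).2
        have huv : τ u < τ v := lt_of_lt_of_le (by linarith [hpos u]) (hprec u v hEuv)
        have hcard : (Finset.univ.filter (fun w => τ w < τ u)).card < n := by
          have hsub : (Finset.univ.filter (fun w => τ w < τ u)) ⊂
              (Finset.univ.filter (fun w => τ w < τ v)) := by
            constructor
            · intro w hw
              simp only [Finset.mem_filter, Finset.mem_univ, true_and] at hw ⊢
              linarith
            · intro hsub'
              have h := hsub' (Finset.mem_filter.mpr ⟨Finset.mem_univ u, huv⟩)
              exact lt_irrefl _ (Finset.mem_filter.mp h).2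
          have := Finset.card_lt_card hsub
          omega
        obtain ⟨l', hlast, hchain, hcov⟩ := IH u hcard
        have humem : u ∈ l' := List.mem_of_mem_getLast? (by simp [hlast])
        refine ⟨l' ++ [v], List.getLast?_concat, ?_, ?_⟩
        · refine List.isChain_append.2 ?_
          refine ⟨hchain, List.isChain_singleton v, ?_⟩
          intro x hx y hy
          simp only [List.head?_cons, Option.mem_def, Option.some.injEq] at hy
          rw [hlast] at hx
          simp only [Option.mem_def, Option.some.injEq] at hx
          subst hx; subst hy; exact hEuv
        · intro t h0 hid htv
          rcases lt_or_ge t (τ u) with h | h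
          · obtain ⟨w, hw, hw2⟩ := hcov t h0 hid h
            exact ⟨w, List.mem_append_left _ hw, hw2⟩
          · rcases lt_or_ge t (τ u + c u) with h2 | h2
            · exact ⟨u, List.mem_append_left _ humem, h, h2⟩
            · exfalso
              refine noIdleReady t h0 (lt_trans htv (htltM v)) ⟨v, htv, ?_⟩ hid
              intro w hw
              have : τ w + c w ≤ τ u + c u :=
                hmax w (Finset.mem_filter.mpr ⟨Finset.mem_univ w, hw⟩)
              linarith
      · -- no predecessor: singleton chain, and no idle time before τ v at all
        refine ⟨[v], rfl, List.isChain_singleton v, ?_⟩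
        intro t h0 hid htv
        exfalso
        refine noIdleReady t h0 (lt_trans htv (htltM v)) ⟨v, htv, ?_⟩ hid
        intro w hw
        exact absurd ⟨w, Finset.mem_filter.mpr ⟨Finset.mem_univ w, hw⟩⟩ hP
  -- pick the last-finishing task
  obtain ⟨v0, -, hv0⟩ := Finset.exists_mem_eq_sup' Finset.univ_nonempty (fun v => τ v + c v)
  have hv0M : M = τ v0 + c v0 := by rw [hM, hv0]
  obtain ⟨l, hlast, hchain, hcov⟩ :=
    main ((Finset.univ.filter (fun u => τ u < τ v0)).card + 1) v0 (Nat.lt_succ_self _)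
  have hv0mem : v0 ∈ l := List.mem_of_mem_getLast? (by simp [hlast])
  -- full coverage of idle instants
  have hcover : ∀ t : ℝ, 0 ≤ t → t < M → Idle t → ∃ v ∈ l, τ v ≤ t ∧ t < τ v + c v := by
    intro t h0 htM hid
    rcases lt_or_ge t (τ v0) with h | h
    · exact hcov t h0 hid h
    · exact ⟨v0, hv0mem, h, hv0M ▸ htM⟩
  refine ⟨l, hchain, fun t h0 htM hid => hcover t h0 htM hid, ?_⟩
  -- Nodup of the chain
  have hnd : l.Nodup := by
    haveI htrans : IsTrans V (fun x y : V => τ x + c x ≤ τ y) := by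
      constructor; intro a b c' h1 h2; have := hpos b; linarith
    have hchain2 : List.Chain' (fun x y : V => τ x + c x ≤ τ y) l :=
      List.IsChain.imp (fun a b h => hprec a b h) hchain
    have hp : l.Pairwise (fun x y => τ x + c x ≤ τ y) :=
      List.isChain_iff_pairwise.mp hchain2
    exact hp.imp (fun {a b} h => by intro hab; subst hab; linarith [hpos a])
  -- measure bound per processor
  set S : Fin m → Set ℝ := fun p => {t : ℝ | t ∈ Set.Ico (0 : ℝ) M ∧
      ∀ v, proc v = p → t ∉ Set.Ico (τ v) (τ v + c v)} with hS
  have hbound : ∀ p : Fin m, (MeasureTheory.volume (S p)).toReal ≤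
      ∑ v ∈ l.toFinset, (if proc v = p then 0 else c v) := by
    intro p
    have hsub : S p ⊆ ⋃ v ∈ l.toFinset, (S p ∩ Set.Ico (τ v) (τ v + c v)) := by
      intro t ht
      obtain ⟨⟨h0, htM⟩, hidle⟩ := ht
      obtain ⟨v, hvl, hv1, hv2⟩ := hcover t h0 htM ⟨p, fun v hv => by
        intro hc; exact hidle v hv ⟨hc.1, hc.2⟩⟩
      exact Set.mem_biUnion (List.mem_toFinset.mpr hvl) ⟨⟨⟨h0, htM⟩, hidle⟩, hv1, hv2⟩
    have h1 : MeasureTheory.volume (S p) ≤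
        ∑ v ∈ l.toFinset, MeasureTheory.volume (S p ∩ Set.Ico (τ v) (τ v + c v)) :=
      le_trans (MeasureTheory.measure_mono hsub)
        (MeasureTheory.measure_biUnion_finset_le _ _)
    have h2 : ∀ v ∈ l.toFinset, MeasureTheory.volume (S p ∩ Set.Ico (τ v) (τ v + c v)) ≤
        ENNReal.ofReal (if proc v = p then 0 else c v) := by
      intro v _
      by_cases hpv : proc v = p
      · have : S p ∩ Set.Ico (τ v) (τ v + c v) = ∅ := by
          ext t
          simp only [Set.mem_inter_iff, Set.mem_empty_iff_false, iff_false, not_and]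
          intro ht
          exact ht.2 v hpv
        simp [this, hpv]
      · calc MeasureTheory.volume (S p ∩ Set.Ico (τ v) (τ v + c v))
            ≤ MeasureTheory.volume (Set.Ico (τ v) (τ v + c v)) :=
              MeasureTheory.measure_mono Set.inter_subset_right
          _ = ENNReal.ofReal (c v) := by rw [Real.volume_Ico]; ring_nf
          _ = ENNReal.ofReal (if proc v = p then 0 else c v) := by simp [hpv]
    have h3 : MeasureTheory.volume (S p) ≤
        ENNReal.ofReal (∑ v ∈ l.toFinset, (if proc v = p then 0 else c v)) := by
      rw [ENNReal.ofReal_sum_of_nonneg (fun v _ => by split <;> simp [(hpos v).le])]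
      exact le_trans h1 (Finset.sum_le_sum h2)
    exact ENNReal.toReal_le_of_le_ofReal
      (Finset.sum_nonneg (fun v _ => by split <;> simp [(hpos v).le])) h3
  -- sum it all up
  rw [hI]
  calc ∑ p : Fin m, (MeasureTheory.volume (S p)).toReal
      ≤ ∑ p : Fin m, ∑ v ∈ l.toFinset, (if proc v = p then 0 else c v) :=
        Finset.sum_le_sum (fun p _ => hbound p)
    _ = ∑ v ∈ l.toFinset, ∑ p : Fin m, (if proc v = p then 0 else c v) :=
        Finset.sum_comm
    _ = ∑ v ∈ l.toFinset, ((m : ℝ) - 1) * c v := by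
        refine Finset.sum_congr rfl (fun v _ => ?_)
        have : ∑ p : Fin m, (if proc v = p then 0 else c v)
            = ∑ p : Fin m, (c v - if proc v = p then c v else 0) := by
          refine Finset.sum_congr rfl (fun p _ => ?_)
          split <;> simp
        rw [this, Finset.sum_sub_distrib]
        simp only [Finset.sum_const, Finset.card_univ, Fintype.card_fin, nsmul_eq_mul]
        have : ∑ p : Fin m, (if proc v = p then c v else 0) = c v := by
          simp
        rw [this]; ring
    _ = ((m : ℝ) - 1) * ∑ v ∈ l.toFinset, c v := by rw [Finset.mul_sum]
    _ = ((m : ℝ) - 1) * (l.map c).sum := by rw [List.sum_toFinset _ hnd]
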